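/- arXiv:1611.03187 — 6 statements merged into one kernel-verified Lean document; each statement's English description precedes it below -/
import Mathlib

section
/- Every grid square of a grid polyhedron P belongs to exactly two bands of P. -/
open scoped Classical

namespace StripFold

/-- A cell of the unit-cube grid (also used for integer grid points and vectors). -/
abbrev Cell : Type := Fin 3 → ℤ

/-- A grid square `(c, i)`: the common face of the unit cubes at cells `c` and `c + eᵢ`. -/
abbrev Sq : Type := Cell × Fin 3

/-- A grid edge `(p, d)`: the unit segment of the cube grid from `p` to `p + e_d`. -/
abbrev GridEdge : Type := Cell × Fin 3

/-- The standard unit vector `eᵢ`. -/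
def unitVec (i : Fin 3) : Cell := fun j => if j = i then 1 else 0

/-- The four grid edges lying on (the boundary of) a grid square. -/
def edgesOf (s : Sq) : Set GridEdge :=
  { e | ∃ j k : Fin 3, j ≠ s.2 ∧ k ≠ s.2 ∧ j ≠ k ∧ e.2 = j ∧
      e.1 s.2 = s.1 s.2 + 1 ∧ e.1 j = s.1 j ∧ (e.1 k = s.1 k ∨ e.1 k = s.1 k + 1) }

/-- The four grid vertices (corners) of a grid square. -/
def vertsOf (s : Sq) : Set Cell :=
  { q | q s.2 = s.1 s.2 + 1 ∧ ∀ j, j ≠ s.2 → (q j = s.1 j ∨ q j = s.1 j + 1) }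

/-- Two grid squares are edge-adjacent: they are distinct and share a grid edge. -/
def edgeAdj (s t : Sq) : Prop := s ≠ t ∧ (edgesOf s ∩ edgesOf t).Nonempty

lemma edgeAdj_symm {s t : Sq} (h : edgeAdj s t) : edgeAdj t s :=
  ⟨h.1.symm, by rw [Set.inter_comm]; exact h.2⟩

/-- The dual graph of a set of grid squares: vertices are the squares, edges join
edge-adjacent squares. -/
def dualGraph (S : Set Sq) : SimpleGraph S where
  Adj a b := edgeAdj a.1 b.1
  symm := ⟨fun _ _ h => edgeAdj_symm h⟩
  loopless := ⟨fun _ h => h.1 rfl⟩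

/-- A grid surface: a finite nonempty set of grid squares whose dual graph is connected. -/
structure IsGridSurface (S : Set Sq) : Prop where
  finite : S.Finite
  nonempty : S.Nonempty
  connected : (dualGraph S).Connected

/-- A milling tour of a grid surface: a closed walk in the dual graph visiting every
vertex at least once.  Its length is `w.length`. -/
def IsMillingTour {S : Set Sq} {v : S} (w : (dualGraph S).Walk v v) : Prop :=
  ∀ u : S, u ∈ w.support

/-- The boundary of a set `C` of unit cubes: the grid squares incident to exactly one
cube of `C`. -/
def boundary (C : Set Cell) : Set Sq :=
  { s | Xor' (s.1 ∈ C) (s.1 + unitVec s.2 ∈ C) }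

/-- All grid edges lying on squares of `P`. -/
def edgesOfSet (P : Set Sq) : Set GridEdge := ⋃ s ∈ P, edgesOf s

/-- All grid vertices lying on squares of `P`. -/
def vertsOfSet (P : Set Sq) : Set Cell := ⋃ s ∈ P, vertsOf s

/-- A grid polyhedron: `P` is the boundary of a finite nonempty set `C` of unit cubes,
`P` is a grid surface, every grid edge lying on a square of `P` lies on exactly two
squares of `P`, and `V - E + F = 2` (stated as `V + F = E + 2`). -/
structure IsGridPolyhedron (C : Set Cell) (P : Set Sq) : Prop where
  finC : C.Finite
  neC : C.Nonempty
  bdry : P = boundary C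
  surface : IsGridSurface P
  edgeTwo : ∀ e : GridEdge, (∃ s ∈ P, e ∈ edgesOf s) →
    { s | s ∈ P ∧ e ∈ edgesOf s }.ncard = 2
  euler : (vertsOfSet P).ncard + P.ncard = (edgesOfSet P).ncard + 2

/-- The squares of `P` that lie in the slab `x_a ∈ [x, x + 1]` and whose normal is
perpendicular to axis `a`. -/
def slabSquares (P : Set Sq) (a : Fin 3) (x : ℤ) : Set Sq :=
  { s | s ∈ P ∧ s.2 ≠ a ∧ s.1 a = x }

/-- `B` is a connected component, under edge-adjacency, of the set `T` of grid squares. -/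
def IsCompOf (B T : Set Sq) : Prop :=
  B.Nonempty ∧ B ⊆ T ∧ (dualGraph B).Connected ∧
    ∀ s ∈ B, ∀ t ∈ T, edgeAdj s t → t ∈ B

/-- A band of a grid polyhedron `P`: an `x`-, `y`-, or `z`-band, i.e. a connected
component under edge-adjacency of the squares of `P` lying in a single slab with
normal perpendicular to the slab axis. -/
def IsBand (P : Set Sq) (B : Set Sq) : Prop :=
  ∃ (a : Fin 3) (x : ℤ), IsCompOf B (slabSquares P a x)

/-- Two bands overlap: they are distinct and some grid square belongs to both. -/
def Overlaps (B B' : Set Sq) : Prop := B ≠ B' ∧ (B ∩ B').Nonempty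

/-- Two bands are adjacent: they do not overlap and some grid square of one is
edge-adjacent to some grid square of the other. -/
def BandAdjacent (B B' : Set Sq) : Prop :=
  ¬ Overlaps B B' ∧ ∃ g ∈ B, ∃ g' ∈ B', edgeAdj g g'

/-- A band cover of `P`: a set of bands of `P` covering every grid square of `P`. -/
def IsBandCover (P : Set Sq) (S : Set (Set Sq)) : Prop :=
  (∀ B ∈ S, IsBand P B) ∧ ∀ g ∈ P, ∃ B ∈ S, g ∈ B

/-- The band graph `G_P`: one vertex per band of `P`, an edge between two bands iff
they overlap. -/
def bandGraph (P : Set Sq) : SimpleGraph {B : Set Sq // IsBand P B} where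
  Adj B B' := Overlaps B.1 B'.1
  symm := ⟨fun _ _ h => ⟨h.1.symm, by rw [Set.inter_comm]; exact h.2⟩⟩
  loopless := ⟨fun _ h => h.1 rfl⟩

section Walks

variable {S : Set Sq} {v : S}

/-- The index of the previous position of a closed walk, cyclically. -/
def prevIdx (w : (dualGraph S).Walk v v) (k : ℕ) : ℕ := (k + w.length - 1) % w.length

/-- The index of the next position of a closed walk, cyclically. -/
def nextIdx (w : (dualGraph S).Walk v v) (k : ℕ) : ℕ := (k + 1) % w.length

/-- The grid square visited at position `k` of the walk. -/
def squareAt (w : (dualGraph S).Walk v v) (k : ℕ) : Sq := (w.getVert k).1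

/-- `e` is a side shared by grid squares `s` and `t`. -/
def sharedSide (s t : Sq) (e : GridEdge) : Prop := e ∈ edgesOf s ∧ e ∈ edgesOf t

/-- `e` is the side through which the visit at position `k` enters its grid square. -/
def EnterSide (w : (dualGraph S).Walk v v) (k : ℕ) (e : GridEdge) : Prop :=
  sharedSide (squareAt w (prevIdx w k)) (squareAt w k) e

/-- `e` is the side through which the visit at position `k` exits its grid square. -/
def ExitSide (w : (dualGraph S).Walk v v) (k : ℕ) (e : GridEdge) : Prop :=
  sharedSide (squareAt w k) (squareAt w (nextIdx w k)) e

/-- The visit at position `k` is straight: it enters and exits through opposite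
(distinct parallel) sides. -/
def StraightVisit (w : (dualGraph S).Walk v v) (k : ℕ) : Prop :=
  ∃ e₁ e₂, EnterSide w k e₁ ∧ ExitSide w k e₂ ∧ e₁ ≠ e₂ ∧ e₁.2 = e₂.2

/-- The visit at position `k` is a turn: it enters and exits through incident
(non-parallel) sides. -/
def TurnVisit (w : (dualGraph S).Walk v v) (k : ℕ) : Prop :=
  ∃ e₁ e₂, EnterSide w k e₁ ∧ ExitSide w k e₂ ∧ e₁.2 ≠ e₂.2

/-- The visit at position `k` is a U-turn: it enters and exits through the same side. -/
def UTurnVisit (w : (dualGraph S).Walk v v) (k : ℕ) : Prop :=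
  ∃ e, EnterSide w k e ∧ ExitSide w k e

/-- The number of turns of a closed walk: the number of visits that are turns or
U-turns. -/
noncomputable def turnCount (w : (dualGraph S).Walk v v) : ℕ :=
  {k | k < w.length ∧ (TurnVisit w k ∨ UTurnVisit w k)}.ncard

/-- The set of positions at which the walk visits the grid square `g`. -/
def visitsOf (w : (dualGraph S).Walk v v) (g : Sq) : Set ℕ :=
  {k | k < w.length ∧ squareAt w k = g}

/-- `g` is visited exactly at the two distinct positions `k₁` and `k₂`. -/
def JunctionAt (w : (dualGraph S).Walk v v) (g : Sq) (k₁ k₂ : ℕ) : Prop :=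
  k₁ ≠ k₂ ∧ visitsOf w g = {k₁, k₂}

/-- The four sides used by the two visits at positions `k₁, k₂` are `e₁, e₂, e₃, e₄`,
pairwise distinct (hence each of the four sides of the square is used exactly once). -/
def FourSides (w : (dualGraph S).Walk v v) (k₁ k₂ : ℕ) (e₁ e₂ e₃ e₄ : GridEdge) : Prop :=
  EnterSide w k₁ e₁ ∧ ExitSide w k₁ e₂ ∧ EnterSide w k₂ e₃ ∧ ExitSide w k₂ e₄ ∧
    e₁ ≠ e₂ ∧ e₁ ≠ e₃ ∧ e₁ ≠ e₄ ∧ e₂ ≠ e₃ ∧ e₂ ≠ e₄ ∧ e₃ ≠ e₄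

/-- `g` is a straight junction: visited exactly twice, each of its four sides used
exactly once, and both visits are straight. -/
def IsStraightJunction (w : (dualGraph S).Walk v v) (g : Sq) : Prop :=
  ∃ k₁ k₂, JunctionAt w g k₁ k₂ ∧ ∃ e₁ e₂ e₃ e₄, FourSides w k₁ k₂ e₁ e₂ e₃ e₄ ∧
    e₁.2 = e₂.2 ∧ e₃.2 = e₄.2

/-- `g` is a turn junction: visited exactly twice, each of its four sides used
exactly once, and both visits are turns. -/
def IsTurnJunction (w : (dualGraph S).Walk v v) (g : Sq) : Prop :=
  ∃ k₁ k₂, JunctionAt w g k₁ k₂ ∧ ∃ e₁ e₂ e₃ e₄, FourSides w k₁ k₂ e₁ e₂ e₃ e₄ ∧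
    e₁.2 ≠ e₂.2 ∧ e₃.2 ≠ e₄.2

end Walks

/-- The third coordinate axis, distinct from distinct axes `i` and `d`. -/
def thirdIdx (i d : Fin 3) : Fin 3 := ⟨(3 - (i.val + d.val)) % 3, Nat.mod_lt _ (by norm_num)⟩

/-- Cross product of integer vectors in 3-space. -/
def cross3 (u v : Cell) : Cell := fun i => u (i + 1) * v (i + 2) - u (i + 2) * v (i + 1)

/-- Dot product of integer vectors in 3-space. -/
def dot3 (u v : Cell) : ℤ := ∑ i : Fin 3, u i * v i

/-- The outward unit normal of the grid square `s` on the boundary of the cube set `C`: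
it points out of `C`. -/
noncomputable def outwardNormal (C : Set Cell) (s : Sq) : Cell :=
  if s.1 ∈ C then unitVec s.2 else -unitVec s.2

/-- The unit direction of travel when entering the grid square `g` through its side `e`:
in-plane, perpendicular to `e`, pointing from `e` into `g`. -/
def enterDir (g : Sq) (e : GridEdge) : Cell :=
  if e.1 (thirdIdx g.2 e.2) = g.1 (thirdIdx g.2 e.2) then unitVec (thirdIdx g.2 e.2)
  else -unitVec (thirdIdx g.2 e.2)

/-- The unit direction of travel when exiting the grid square `g` through its side `e`. -/
def exitDir (g : Sq) (e : GridEdge) : Cell := -enterDir g e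

section Turns

variable {S : Set Sq} {v : S}

/-- The visit at position `k` is a left turn: it enters with direction `u` and exits
with direction `v` through incident sides, with `(u × v) · n > 0` for the outward
normal `n`. -/
def IsLeftTurnVisit (C : Set Cell) (w : (dualGraph S).Walk v v) (k : ℕ) : Prop :=
  ∃ e₁ e₂, EnterSide w k e₁ ∧ ExitSide w k e₂ ∧ e₁.2 ≠ e₂.2 ∧
    0 < dot3 (cross3 (enterDir (squareAt w k) e₁) (exitDir (squareAt w k) e₂))
        (outwardNormal C (squareAt w k))

/-- The visit at position `k` is a right turn: `(u × v) · n < 0`. -/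
def IsRightTurnVisit (C : Set Cell) (w : (dualGraph S).Walk v v) (k : ℕ) : Prop :=
  ∃ e₁ e₂, EnterSide w k e₁ ∧ ExitSide w k e₂ ∧ e₁.2 ≠ e₂.2 ∧
    dot3 (cross3 (enterDir (squareAt w k) e₁) (exitDir (squareAt w k) e₂))
        (outwardNormal C (squareAt w k)) < 0

end Turns

/-- `k₁` and `k₂` are cyclically consecutive elements of the set `T` of positions:
no element of `T` lies strictly between them in cyclic order. -/
def CyclicallyConsecutive (T : Set ℕ) (k₁ k₂ : ℕ) : Prop :=
  k₁ ∈ T ∧ k₂ ∈ T ∧ k₁ ≠ k₂ ∧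
    ∀ j ∈ T, j ≠ k₁ → j ≠ k₂ →
      ¬ ((k₁ < j ∧ j < k₂) ∨ (k₂ < k₁ ∧ (k₁ < j ∨ j < k₂)))


/-- The connected component, under edge-adjacency within `T`, of the square `g`. -/
def compSet (T : Set Sq) (g : Sq) : Set Sq :=
  { t | ∃ (hg : g ∈ T) (ht : t ∈ T), (dualGraph T).Reachable ⟨g, hg⟩ ⟨t, ht⟩ }

lemma mem_compSet_self {T : Set Sq} {g : Sq} (hg : g ∈ T) : g ∈ compSet T g :=
  ⟨hg, hg, SimpleGraph.Reachable.refl _⟩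

lemma compSet_subset {T : Set Sq} {g : Sq} : compSet T g ⊆ T := by
  rintro t ⟨_, ht, _⟩; exact ht

lemma compSet_closed {T : Set Sq} {g s t : Sq} (hs : s ∈ compSet T g) (ht : t ∈ T)
    (h : edgeAdj s t) : t ∈ compSet T g := by
  obtain ⟨hgT, hsT, r⟩ := hs
  exact ⟨hgT, ht, r.trans (SimpleGraph.Adj.reachable (show (dualGraph T).Adj ⟨s, hsT⟩ ⟨t, ht⟩ from h))⟩

lemma mem_compSet_of_walk {T : Set Sq} {g : Sq} :
    ∀ {x y : ↥T} (_ : (dualGraph T).Walk x y), x.1 ∈ compSet T g → y.1 ∈ compSet T g := by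
  intro x y w
  induction w with
  | nil => exact id
  | @cons x z y h p ih => exact fun hx => ih (compSet_closed hx z.2 h)

lemma reach_lift {T : Set Sq} {g : Sq} :
    ∀ {x y : ↥T} (_ : (dualGraph T).Walk x y) (hx : x.1 ∈ compSet T g)
      (hy : y.1 ∈ compSet T g),
      (dualGraph (compSet T g)).Reachable ⟨x.1, hx⟩ ⟨y.1, hy⟩ := by
  intro x y w
  induction w with
  | nil => exact fun hx hy => SimpleGraph.Reachable.refl _
  | @cons x z y h p ih =>
      intro hx hy
      have hz : z.1 ∈ compSet T g := compSet_closed hx z.2 h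
      exact (SimpleGraph.Adj.reachable
        (show (dualGraph (compSet T g)).Adj ⟨x.1, hx⟩ ⟨z.1, hz⟩ from h)).trans (ih hz hy)

lemma reach_base {T : Set Sq} {g : Sq} (hg : g ∈ T) {t : Sq} (ht : t ∈ compSet T g) :
    (dualGraph (compSet T g)).Reachable ⟨g, mem_compSet_self hg⟩ ⟨t, ht⟩ := by
  have ht' := ht
  obtain ⟨hgT, htT, r⟩ := ht'
  obtain ⟨w⟩ := r
  exact reach_lift w (mem_compSet_self hg) ht

lemma compSet_isCompOf {T : Set Sq} {g : Sq} (hg : g ∈ T) :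
    IsCompOf (compSet T g) T := by
  refine ⟨⟨g, mem_compSet_self hg⟩, compSet_subset, ?_, fun s hs t ht h => compSet_closed hs ht h⟩
  haveI : Nonempty ↥(compSet T g) := ⟨⟨g, mem_compSet_self hg⟩⟩
  exact SimpleGraph.Connected.mk
    (fun u v => (reach_base hg u.2).symm.trans (reach_base hg v.2))

lemma walk_mem_of_isCompOf {B T : Set Sq} (hB : IsCompOf B T) :
    ∀ {x y : ↥T} (_ : (dualGraph T).Walk x y), x.1 ∈ B → y.1 ∈ B := by
  intro x y w
  induction w with
  | nil => exact id
  | @cons x z y h p ih => exact fun hx => ih (hB.2.2.2 x.1 hx z.1 z.2 h)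

/-- Uniqueness of the component containing `g`. -/
lemma isCompOf_eq_compSet {B T : Set Sq} {g : Sq} (hB : IsCompOf B T) (hg : g ∈ B) :
    B = compSet T g := by
  have hgT : g ∈ T := hB.2.1 hg
  apply Set.eq_of_subset_of_subset
  · intro t ht
    obtain ⟨w⟩ := hB.2.2.1.preconnected ⟨g, hg⟩ ⟨t, ht⟩
    have : ∀ {x y : ↥B} (_ : (dualGraph B).Walk x y), x.1 ∈ compSet T g → y.1 ∈ compSet T g := by
      intro x y w
      induction w with
      | nil => exact id
      | @cons x z y h p ih => exact fun hx => ih (compSet_closed hx (hB.2.1 z.2) h)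
    exact this w (mem_compSet_self hgT)
  · intro t ht
    obtain ⟨hgT', htT, r⟩ := ht
    obtain ⟨w⟩ := r
    exact walk_mem_of_isCompOf hB w hg

lemma fin3_eq_third {a a' i t : Fin 3} (h : a ≠ a') (h1 : a ≠ i) (h2 : a' ≠ i)
    (h3 : t ≠ a) (h4 : t ≠ a') : t = i := by
  have := a.isLt; have := a'.isLt; have := i.isLt; have := t.isLt
  simp only [Ne, Fin.ext_iff] at *
  omega

lemma fin3_cover {a a' i : Fin 3} (h : a ≠ a') (h1 : a ≠ i) (h2 : a' ≠ i) :
    ∀ m : Fin 3, m = a ∨ m = a' ∨ m = i := by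
  intro m
  have := a.isLt; have := a'.isLt; have := i.isLt; have := m.isLt
  simp only [Ne, Fin.ext_iff] at *
  omega

lemma fin3_other (i : Fin 3) : ∀ a : Fin 3, a ≠ i → a = i + 1 ∨ a = i + 2 := by
  intro a ha
  have := a.isLt; have := i.isLt
  simp only [Ne, Fin.ext_iff, Fin.add_def] at *
  omega

lemma fin3_facts (i : Fin 3) : i + 1 ≠ i ∧ i + 2 ≠ i ∧ i + 1 ≠ i + 2 := by
  have := i.isLt
  simp only [Ne, Fin.ext_iff, Fin.add_def]
  omega

/-- The two components (for two distinct slab axes) containing `g` are distinct. -/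
lemma comps_ne {C : Set Cell} {P : Set Sq} (hP : IsGridPolyhedron C P) {g : Sq}
    (hg : g ∈ P) {a a' : Fin 3} (haa : a ≠ a') (ha : a ≠ g.2) (ha' : a' ≠ g.2) :
    compSet (slabSquares P a (g.1 a)) g ≠ compSet (slabSquares P a' (g.1 a')) g := by
  intro heq
  set p : Cell := fun m => if m = g.2 then g.1 g.2 + 1 else g.1 m with hp
  set e : GridEdge := (p, a) with hedef
  have he : e ∈ edgesOf g := by
    refine ⟨a, a', ha, ha', haa, rfl, ?_, ?_, Or.inl ?_⟩
    · simp [hedef, hp]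
    · simp [hedef, hp, ha]
    · simp [hedef, hp, ha']
  have h2 := hP.edgeTwo e ⟨g, hg, he⟩
  rw [Set.ncard_eq_two] at h2
  obtain ⟨s, t, hst, hset⟩ := h2
  have hgmem : g ∈ ({s, t} : Set Sq) := hset ▸ (⟨hg, he⟩ : g ∈ {s | s ∈ P ∧ e ∈ edgesOf s})
  have hu : ∃ u, u ≠ g ∧ u ∈ P ∧ e ∈ edgesOf u := by
    have hs' : s ∈ {s | s ∈ P ∧ e ∈ edgesOf s} := hset ▸ (Or.inl rfl)
    have ht' : t ∈ {s | s ∈ P ∧ e ∈ edgesOf s} := hset ▸ (Or.inr rfl)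
    rcases hgmem with h | h
    · exact ⟨t, by rw [← h] at hst; exact fun hh => hst hh.symm, ht'.1, ht'.2⟩
    · exact ⟨s, by rw [← h] at hst; exact hst, hs'.1, hs'.2⟩
  obtain ⟨u, hug, huP, heu⟩ := hu
  obtain ⟨j, k, hj, hk, hjk, hej, h1, h2', h3⟩ := heu
  have haj : a = j := hej
  subst haj
  have hua : u.2 ≠ a := fun hh => hj hh.symm
  have hu1a : u.1 a = g.1 a := by
    have := h2'.symm
    simpa [hedef, hp, ha] using this
  have huslab : u ∈ slabSquares P a (g.1 a) := ⟨huP, hua, hu1a⟩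
  have hadj : edgeAdj g u := ⟨fun hh => hug hh.symm, ⟨e, he, ⟨a, k, hj, hk, hjk, hej, h1, h2', h3⟩⟩⟩
  have hucomp : u ∈ compSet (slabSquares P a (g.1 a)) g :=
    compSet_closed (mem_compSet_self ⟨hg, fun hh => ha hh.symm, rfl⟩) huslab hadj
  rw [heq] at hucomp
  have huslab' : u ∈ slabSquares P a' (g.1 a') := compSet_subset hucomp
  have hua' : u.2 ≠ a' := huslab'.2.1
  have hu2 : u.2 = g.2 := fin3_eq_third haa ha ha' hua hua'
  have hu1i : u.1 g.2 = g.1 g.2 := by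
    have := h1
    rw [hu2] at this
    have hpi : e.1 g.2 = g.1 g.2 + 1 := by simp [hedef, hp]
    omega
  apply hug
  have h1eq : u.1 = g.1 := by
    funext m
    rcases fin3_cover haa ha ha' m with rfl | rfl | rfl
    · exact hu1a
    · exact huslab'.2.2
    · exact hu1i
  exact Prod.ext h1eq hu2

/-- Every grid square of a grid polyhedron `P` belongs to exactly two
bands of `P`. -/
theorem square_mem_exactly_two_bands (C : Set Cell) (P : Set Sq)
    (hP : IsGridPolyhedron C P) (g : Sq) (hg : g ∈ P) :
    {B : Set Sq | IsBand P B ∧ g ∈ B}.ncard = 2 := by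
  obtain ⟨hne1, hne2, hne12⟩ := fin3_facts g.2
  have hslab : ∀ a : Fin 3, a ≠ g.2 → g ∈ slabSquares P a (g.1 a) :=
    fun a ha => ⟨hg, fun hh => ha hh.symm, rfl⟩
  have hband : ∀ a : Fin 3, a ≠ g.2 → IsBand P (compSet (slabSquares P a (g.1 a)) g) :=
    fun a ha => ⟨a, g.1 a, compSet_isCompOf (hslab a ha)⟩
  have hset : {B : Set Sq | IsBand P B ∧ g ∈ B} =
      {compSet (slabSquares P (g.2 + 1) (g.1 (g.2 + 1))) g,
       compSet (slabSquares P (g.2 + 2) (g.1 (g.2 + 2))) g} := by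
    ext B
    constructor
    · rintro ⟨⟨a, x, hcomp⟩, hgB⟩
      have hgslab := hcomp.2.1 hgB
      have hax : a ≠ g.2 := fun hh => hgslab.2.1 hh.symm
      have hxval : x = g.1 a := hgslab.2.2.symm
      subst hxval
      have hBeq : B = compSet (slabSquares P a (g.1 a)) g := isCompOf_eq_compSet hcomp hgB
      rcases fin3_other g.2 a hax with rfl | rfl
      · exact Or.inl hBeq
      · exact Or.inr hBeq
    · rintro (rfl | rfl)
      · exact ⟨hband _ hne1, mem_compSet_self (hslab _ hne1)⟩
      · exact ⟨hband _ hne2, mem_compSet_self (hslab _ hne2)⟩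
  rw [hset]
  exact Set.ncard_pair (comps_ne hP hg hne12 hne1 hne2)

end StripFold
end

section
/- For a grid polyhedron P, every grid square of P whose normal is perpendicular to the x-axis and which lies in a given x-slab is edge-adjacent to exactly two other grid squares of P whose normal is perpendicular to the x-axis and which lie in the same x-slab; consequently every x-band of P is a simple cycle in the dual graph of P (and analogously for y-bands and z-bands). -/
open scoped Classical

namespace StripFold

lemma thirdIdx_spec : ∀ i b : Fin 3, i ≠ b →
    (thirdIdx i b ≠ i ∧ thirdIdx i b ≠ b ∧ ∀ j : Fin 3, j ≠ i → j ≠ b → j = thirdIdx i b) := by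
  decide

lemma thirdIdx_third : ∀ i b : Fin 3, i ≠ b → thirdIdx i (thirdIdx i b) = b := by decide

lemma fin3_tri : ∀ i b j : Fin 3, i ≠ b → (j = i ∨ j = b ∨ j = thirdIdx i b) := by decide

lemma mem_edgesOf_snd {c p : Cell} {i b : Fin 3} (h : (p, b) ∈ edgesOf (c, i)) : b ≠ i := by
  obtain ⟨j, k, hj, _, _, he2, _⟩ := h
  simp only at he2 hj
  exact he2 ▸ hj

lemma mem_edgesOf_iff {c p : Cell} {i b : Fin 3} (hbi : b ≠ i) :
    (p, b) ∈ edgesOf (c, i) ↔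
      p i = c i + 1 ∧ p b = c b ∧
        (p (thirdIdx i b) = c (thirdIdx i b) ∨ p (thirdIdx i b) = c (thirdIdx i b) + 1) := by
  obtain ⟨h1, h2, h3⟩ := thirdIdx_spec i b (Ne.symm hbi)
  constructor
  · rintro ⟨j, k, hj, hk, hjk, he2, hei, hej, hek⟩
    simp only at hj hk he2 hei hej hek
    subst he2
    have hk3 : k = thirdIdx i b := h3 k hk (fun h => hjk h.symm)
    subst hk3
    exact ⟨hei, hej, hek⟩
  · rintro ⟨hei, heb, hek⟩
    exact ⟨b, thirdIdx i b, hbi, h1, fun h => h2 h.symm, rfl, hei, heb, hek⟩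

lemma exists_unique_other {α : Type*} {E : Set α} (h2 : E.ncard = 2) {s : α} (hs : s ∈ E) :
    ∃ t, t ≠ s ∧ t ∈ E ∧ ∀ t' ∈ E, t' ≠ s → t' = t := by
  obtain ⟨x, y, hxy, rfl⟩ := Set.ncard_eq_two.mp h2
  simp only [Set.mem_insert_iff, Set.mem_singleton_iff] at hs
  rcases hs with rfl | rfl
  · refine ⟨y, hxy.symm, by simp, fun t' ht' hne => ?_⟩
    simp only [Set.mem_insert_iff, Set.mem_singleton_iff] at ht'
    tauto
  · refine ⟨x, hxy, by simp, fun t' ht' hne => ?_⟩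
    simp only [Set.mem_insert_iff, Set.mem_singleton_iff] at ht'
    tauto

lemma add_unitVec_apply (v : Cell) (m j : Fin 3) :
    (v + unitVec m) j = v j + if j = m then 1 else 0 := rfl

lemma slab_adj_two (P : Set Sq)
    (edgeTwo : ∀ e : GridEdge, (∃ s ∈ P, e ∈ edgesOf s) →
      { s | s ∈ P ∧ e ∈ edgesOf s }.ncard = 2)
    (a : Fin 3) (x : ℤ) (s : Sq) (hs : s ∈ slabSquares P a x) :
    {t | t ∈ slabSquares P a x ∧ edgeAdj s t}.ncard = 2 := by
  obtain ⟨c, i⟩ := s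
  obtain ⟨hsP, hsi, hsx⟩ := hs
  simp only at hsi hsx
  obtain ⟨hk_i, hk_a, huniq⟩ := thirdIdx_spec i a hsi
  set k := thirdIdx i a with hkdef
  have htri : ∀ j : Fin 3, j = i ∨ j = a ∨ j = k := fun j => fin3_tri i a j hsi
  have hai : a ≠ i := hsi.symm
  have A1 : (c + unitVec i) i = c i + 1 := by simp [add_unitVec_apply, unitVec]
  have A2 : (c + unitVec i) a = c a := by simp [add_unitVec_apply, unitVec, hai]
  have A3 : (c + unitVec i) k = c k := by simp [add_unitVec_apply, unitVec, hk_i]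
  have B1 : (c + unitVec i + unitVec k) i = c i + 1 := by
    simp [add_unitVec_apply, unitVec, Ne.symm hk_i]
  have B2 : (c + unitVec i + unitVec k) a = c a := by
    simp [add_unitVec_apply, unitVec, hai, Ne.symm hk_a]
  have B3 : (c + unitVec i + unitVec k) k = c k + 1 := by
    simp [add_unitVec_apply, unitVec, hk_i]
  set e₀ : GridEdge := (c + unitVec i, a) with he₀def
  set e₁ : GridEdge := (c + unitVec i + unitVec k, a) with he₁def
  have he₀s : e₀ ∈ edgesOf (c, i) := by
    rw [he₀def, mem_edgesOf_iff hai, ← hkdef]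
    exact ⟨A1, A2, Or.inl A3⟩
  have he₁s : e₁ ∈ edgesOf (c, i) := by
    rw [he₁def, mem_edgesOf_iff hai, ← hkdef]
    exact ⟨B1, B2, Or.inr B3⟩
  have he₀a : e₀.1 a = x := by rw [he₀def]; simpa [A2] using hsx
  have he₁a : e₁.1 a = x := by rw [he₁def]; simpa [B2] using hsx
  -- any square of P containing an edge in direction a with a-coordinate x is in the slab
  have claim2 : ∀ t ∈ P, ∀ p : Cell, (p, a) ∈ edgesOf t → p a = x →
      t ∈ slabSquares P a x := by
    rintro ⟨d, m⟩ htP p hpe hex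
    have hma : a ≠ m := mem_edgesOf_snd hpe
    rw [mem_edgesOf_iff hma] at hpe
    exact ⟨htP, Ne.symm hma, by simp only; omega⟩
  -- classification of shared edges between s and another slab square
  have claim3 : ∀ t, t ∈ slabSquares P a x → edgeAdj (c, i) t →
      ∀ e, e ∈ edgesOf (c, i) → e ∈ edgesOf t → e = e₀ ∨ e = e₁ := by
    rintro ⟨d, m⟩ ⟨htP, htm, htx⟩ hadj ⟨p, b⟩ hes het
    simp only at htm htx
    have hbi : b ≠ i := mem_edgesOf_snd hes
    have hbm : b ≠ m := mem_edgesOf_snd het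
    rw [mem_edgesOf_iff hbi] at hes
    rw [mem_edgesOf_iff hbm] at het
    obtain ⟨hp1, hp2, hp3⟩ := hes
    rcases htri b with rfl | rfl | rfl
    · exact absurd rfl hbi
    · -- b = a
      rw [← hkdef] at hp3
      rcases hp3 with h3 | h3
      · left
        rw [he₀def, Prod.mk.injEq]
        refine ⟨funext fun j' => ?_, rfl⟩
        rcases htri j' with rfl | rfl | rfl
        · rw [A1, hp1]
        · rw [A2, hp2]
        · rw [A3, h3]
      · right
        rw [he₁def, Prod.mk.injEq]
        refine ⟨funext fun j' => ?_, rfl⟩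
        rcases htri j' with rfl | rfl | rfl
        · rw [B1, hp1]
        · rw [B2, hp2]
        · rw [B3, h3]
    · -- b = k : the other square is s itself, contradiction
      exfalso
      have hmi : m = i := by
        rcases htri m with h2 | h2 | h2
        · exact h2
        · exact absurd h2 htm
        · exact absurd h2.symm hbm
      obtain ⟨hq1, hq2, hq3⟩ := het
      rw [hmi] at hq1
      apply hadj.1
      rw [Prod.mk.injEq]
      refine ⟨funext fun j' => ?_, hmi.symm⟩
      rcases htri j' with rfl | rfl | rfl
      · omega
      · omega
      · omega
  -- the two neighbours across e₀ and e₁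
  obtain ⟨t₀, ht₀ne, ⟨ht₀P, ht₀e⟩, ht₀uniq⟩ :=
    exists_unique_other (edgeTwo e₀ ⟨(c, i), hsP, he₀s⟩) ⟨hsP, he₀s⟩
  obtain ⟨t₁, ht₁ne, ⟨ht₁P, ht₁e⟩, ht₁uniq⟩ :=
    exists_unique_other (edgeTwo e₁ ⟨(c, i), hsP, he₁s⟩) ⟨hsP, he₁s⟩
  have ht01 : t₀ ≠ t₁ := by
    rintro rfl
    obtain ⟨d, m⟩ := t₀
    have hma : a ≠ m := mem_edgesOf_snd (c := d) (by rw [he₀def] at ht₀e; exact ht₀e)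
    rw [he₀def, mem_edgesOf_iff hma] at ht₀e
    rw [he₁def, mem_edgesOf_iff hma] at ht₁e
    obtain ⟨h01, h02, h03⟩ := ht₀e
    obtain ⟨h11, h12, h13⟩ := ht₁e
    have hmne : m = i ∨ m = k := by
      rcases htri m with h2 | h2 | h2
      · exact Or.inl h2
      · exact absurd h2.symm hma
      · exact Or.inr h2
    rcases hmne with hmi | hmk
    · -- m = i : coordinates force d = c, i.e. t₀ = s
      rw [hmi] at h01 h03 h11 h13
      rw [← hkdef] at h03 h13
      rw [A1] at h01
      rw [B1] at h11
      rw [A2] at h02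
      rw [B2] at h12
      rw [A3] at h03
      rw [B3] at h13
      by_cases hdk : d k = c k
      · apply ht₀ne
        rw [Prod.mk.injEq]
        refine ⟨funext fun j' => ?_, hmi⟩
        rcases htri j' with rfl | rfl | rfl
        · omega
        · omega
        · omega
      · omega
    · -- m = k : contradiction on the k-coordinate
      rw [hmk] at h01 h11
      rw [A3] at h01
      rw [B3] at h11
      omega
  -- final set equality
  have hTeq : {t | t ∈ slabSquares P a x ∧ edgeAdj (c, i) t} = {t₀, t₁} := by
    ext t
    simp only [Set.mem_setOf_eq, Set.mem_insert_iff, Set.mem_singleton_iff]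
    constructor
    · rintro ⟨hts, hadj⟩
      obtain ⟨e, hes, het⟩ := hadj.2
      rcases claim3 t hts hadj e hes het with rfl | rfl
      · exact Or.inl (ht₀uniq t ⟨hts.1, het⟩ (Ne.symm hadj.1))
      · exact Or.inr (ht₁uniq t ⟨hts.1, het⟩ (Ne.symm hadj.1))
    · rintro (rfl | rfl)
      · exact ⟨claim2 t ht₀P e₀.1 ht₀e he₀a,
          Ne.symm ht₀ne, ⟨e₀, he₀s, ht₀e⟩⟩
      · exact ⟨claim2 t ht₁P e₁.1 ht₁e he₁a,
          Ne.symm ht₁ne, ⟨e₁, he₁s, ht₁e⟩⟩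
  rw [hTeq]
  exact Set.ncard_pair ht01


open SimpleGraph Walk in
lemma cycle_two_neighbors {V : Type*} {G : SimpleGraph V} {u : V} {c : G.Walk u u}
    (hc : c.IsCycle) : ∃ x y, x ≠ y ∧ G.Adj u x ∧ G.Adj u y ∧
      x ∈ c.support ∧ y ∈ c.support := by
  cases c with
  | nil => exact absurd hc (Walk.IsCycle.not_of_nil)
  | @cons _ x _ h p =>
    have h3 := hc.three_le_length
    rw [Walk.cons_isCycle_iff] at hc
    obtain ⟨hp, he⟩ := hc
    have hn : 2 ≤ p.length := by simpa using h3
    have hlt : p.length - 1 < p.length := by omega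
    have hadjy : G.Adj (p.getVert (p.length - 1)) u := by
      have := p.adj_getVert_succ hlt
      rwa [show p.length - 1 + 1 = p.length by omega, p.getVert_length] at this
    have hyedge : s(p.getVert (p.length - 1), u) ∈ p.edges := by
      have h2 := p.toSubgraph_adj_getVert hlt
      rw [show p.length - 1 + 1 = p.length by omega, p.getVert_length] at h2
      exact (p.mem_edges_toSubgraph).mp (SimpleGraph.Subgraph.mem_edgeSet.mpr h2)
    have hxy : x ≠ p.getVert (p.length - 1) := by
      intro heq
      apply he
      rw [Sym2.eq_swap, ← heq] at hyedge
      exact hyedge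
    refine ⟨x, p.getVert (p.length - 1), hxy, h, hadjy.symm, ?_, ?_⟩
    · simp [Walk.support_cons]
    · rw [Walk.support_cons]
      exact List.mem_cons_of_mem _ (Walk.mem_support_iff_exists_getVert.mpr
        ⟨p.length - 1, rfl, by omega⟩)

open SimpleGraph Walk in
lemma cycle_support_closed {V : Type*} [Finite V] {G : SimpleGraph V}
    (hdeg : ∀ v, (G.neighborSet v).ncard = 2) {v : V} {c : G.Walk v v}
    (hc : c.IsCycle) {u w : V} (hu : u ∈ c.support) (hadj : G.Adj u w) :
    w ∈ c.support := by
  classical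
  have hc' : (c.rotate u hu).IsCycle := hc.rotate hu
  have hsupp : ∀ z, z ∈ (c.rotate u hu).support → z ∈ c.support := by
    intro z hz
    rw [Walk.support_eq_cons] at hz
    rcases List.mem_cons.mp hz with rfl | hz
    · exact hu
    · exact List.mem_of_mem_tail (((c.support_rotate u hu).mem_iff).mp hz)
  obtain ⟨x, y, hxy, hx, hy, hxs, hys⟩ := cycle_two_neighbors hc'
  have hsub : ({x, y} : Set V) ⊆ G.neighborSet u := by
    rintro z (rfl | rfl) <;> simpa using ‹_›
  have heq : ({x, y} : Set V) = G.neighborSet u := by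
    apply Set.eq_of_subset_of_ncard_le hsub _ (Set.toFinite _)
    rw [hdeg u, Set.ncard_pair hxy]
  have hwmem : w ∈ ({x, y} : Set V) := by rw [heq]; exact hadj
  rcases hwmem with rfl | rfl
  · exact hsupp _ hxs
  · exact hsupp _ hys

open SimpleGraph Walk in
lemma two_regular_hamiltonian {V : Type*} [Fintype V] {G : SimpleGraph V}
    (hconn : G.Connected) (hdeg : ∀ v, (G.neighborSet v).ncard = 2) :
    ∃ (v : V) (c : G.Walk v v), c.IsCycle ∧ ∀ u, u ∈ c.support := by
  classical
  have hdegree : ∀ v, G.degree v = 2 := by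
    intro v
    rw [← hdeg v, ← SimpleGraph.card_neighborSet_eq_degree, Set.ncard_eq_toFinset_card',
      Set.toFinset_card]
  have hnacyc : ¬ G.IsAcyclic := by
    intro hacyc
    have htree : G.IsTree := ⟨hconn, hacyc⟩
    have h1 := htree.card_edgeFinset
    have h2 := G.sum_degrees_eq_twice_card_edges
    simp only [hdegree, Finset.sum_const, Finset.card_univ, smul_eq_mul] at h2
    omega
  rw [SimpleGraph.IsAcyclic] at hnacyc
  push_neg at hnacyc
  obtain ⟨v, c, hc⟩ := hnacyc
  refine ⟨v, c, hc, fun u => ?_⟩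
  obtain ⟨q⟩ := hconn.preconnected v u
  have aux : ∀ {a b : V} (q : G.Walk a b), a ∈ c.support → b ∈ c.support := by
    intro a b q
    induction q with
    | nil => exact id
    | cons h q ih => exact fun ha => ih (cycle_support_closed hdeg hc ha h)
  exact aux q c.start_mem_support

/-- Every square of a grid polyhedron `P` lying in a given slab with
normal perpendicular to the slab axis is edge-adjacent to exactly two other such
squares of the same slab; consequently every band of `P` is a simple cycle in the
dual graph of `P`. -/
theorem slab_degree_two_and_bands_are_simple_cycles (C : Set Cell) (P : Set Sq)
    (hP : IsGridPolyhedron C P) :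
    (∀ (a : Fin 3) (x : ℤ), ∀ s ∈ slabSquares P a x,
      {t | t ∈ slabSquares P a x ∧ edgeAdj s t}.ncard = 2) ∧
    (∀ B : Set Sq, IsBand P B → ∃ (u : P) (w : (dualGraph P).Walk u u),
      w.IsCycle ∧ ∀ y : P, y ∈ w.support ↔ (y : Sq) ∈ B) := by
  constructor
  · intro a x s hs
    exact slab_adj_two P hP.edgeTwo a x s hs
  · rintro B ⟨a, x, hBne, hBsub, hBconn, hBclosed⟩
    have hBsubP : B ⊆ P := fun t ht => (hBsub ht).1
    have hBfin : B.Finite := hP.surface.finite.subset hBsubP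
    haveI : Fintype ↥B := hBfin.fintype
    have hdeg : ∀ v : ↥B, ((dualGraph B).neighborSet v).ncard = 2 := by
      intro v
      have himg : Subtype.val '' ((dualGraph B).neighborSet v) =
          {t | t ∈ slabSquares P a x ∧ edgeAdj v.1 t} := by
        ext t
        simp only [Set.mem_image, SimpleGraph.mem_neighborSet, Set.mem_setOf_eq]
        constructor
        · rintro ⟨u, hadj, rfl⟩
          exact ⟨hBsub u.2, hadj⟩
        · rintro ⟨hts, hadj⟩
          exact ⟨⟨t, hBclosed v.1 v.2 t hts hadj⟩, hadj, rfl⟩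
      have h2 := slab_adj_two P hP.edgeTwo a x v.1 (hBsub v.2)
      rw [← Set.ncard_image_of_injective _ Subtype.val_injective, himg]
      exact h2
    obtain ⟨v0, c0, hc0, hham⟩ := two_regular_hamiltonian hBconn hdeg
    let f : dualGraph B →g dualGraph P := ⟨fun b => ⟨b.1, hBsubP b.2⟩, fun h => h⟩
    have hfinj : Function.Injective f := by
      intro u w h
      have h2 : (f u).1 = (f w).1 := congrArg Subtype.val h
      exact Subtype.ext h2
    refine ⟨f v0, c0.map f,
      (SimpleGraph.Walk.map_isCycle_iff_of_injective hfinj).mpr hc0, ?_⟩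
    intro y
    rw [SimpleGraph.Walk.support_map]
    constructor
    · intro hy
      obtain ⟨b, hb, rfl⟩ := List.mem_map.mp hy
      exact b.2
    · intro hy
      exact List.mem_map.mpr ⟨⟨y.1, hy⟩, hham _, Subtype.ext rfl⟩


end StripFold
end

section
/- Every band of a grid polyhedron contains an even number of grid squares. -/
open scoped Classical

namespace StripFold

/-- Parity of the coordinate sum of the endpoint of a grid edge. -/
def epar (e : GridEdge) : ZMod 2 := ((e.1 0 + e.1 1 + e.1 2 : ℤ) : ZMod 2)

/-- The two sides of square `s` pointing in direction `a` (for `ε = 0, 1`). -/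
def sideEdge (a : Fin 3) (s : Sq) (ε : ℤ) : GridEdge :=
  (fun j => if j = s.2 then s.1 j + 1 else if j = a then s.1 j else s.1 j + ε, a)

lemma exists_third : ∀ i a : Fin 3, i ≠ a → ∃ t : Fin 3, t ≠ i ∧ t ≠ a := by decide

lemma fin3_cases : ∀ x y z w : Fin 3, x ≠ y → x ≠ z → y ≠ z →
    w = x ∨ w = y ∨ w = z := by decide

lemma sideEdge_mem {a : Fin 3} {s : Sq} (h : a ≠ s.2) {ε : ℤ} (hε : ε = 0 ∨ ε = 1) :
    sideEdge a s ε ∈ edgesOf s := by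
  obtain ⟨t, hts, hta⟩ := exists_third s.2 a (fun hh => h hh.symm)
  refine ⟨a, t, h, hts, fun hh => hta hh.symm, rfl, ?_, ?_, ?_⟩
  · simp [sideEdge]
  · simp [sideEdge, h]
  · simp only [sideEdge, if_neg hts, if_neg hta]
    rcases hε with rfl | rfl
    · exact Or.inl (add_zero _)
    · exact Or.inr rfl

lemma epar_sideEdge (a : Fin 3) (s : Sq) (h : a ≠ s.2) :
    epar (sideEdge a s 1) = epar (sideEdge a s 0) + 1 := by
  obtain ⟨c, i⟩ := s
  simp only [epar, sideEdge] at *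
  fin_cases i <;> fin_cases a <;> simp_all <;> ring

/-- The side of `s` in direction `a` with even coordinate-sum parity. -/
noncomputable def evenSide (a : Fin 3) (s : Sq) : GridEdge :=
  if epar (sideEdge a s 0) = 0 then sideEdge a s 0 else sideEdge a s 1

lemma evenSide_spec {a : Fin 3} {s : Sq} (h : a ≠ s.2) :
    evenSide a s ∈ edgesOf s ∧ epar (evenSide a s) = 0 ∧ (evenSide a s).2 = a := by
  unfold evenSide
  split_ifs with h0
  · exact ⟨sideEdge_mem h (Or.inl rfl), h0, rfl⟩
  · refine ⟨sideEdge_mem h (Or.inr rfl), ?_, rfl⟩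
    have h1 : epar (sideEdge a s 0) = 1 := by
      rcases (by decide : ∀ x : ZMod 2, x = 0 ∨ x = 1) (epar (sideEdge a s 0)) with hh | hh
      · exact absurd hh h0
      · exact hh
    rw [epar_sideEdge a s h, h1]
    decide

lemma edge_dir {s : Sq} {e : GridEdge} {a : Fin 3} (hmem : e ∈ edgesOf s)
    (he2 : e.2 = a) : a ≠ s.2 ∧ e.1 a = s.1 a := by
  obtain ⟨j, k, hj, hk, hjk, hej, h1, h2, h3⟩ := hmem
  have hja : j = a := by rw [← hej, he2]
  rw [hja] at hj h2
  exact ⟨hj, h2⟩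

lemma edge_eq_sideEdge {s : Sq} {e : GridEdge} {a : Fin 3} (hmem : e ∈ edgesOf s)
    (he2 : e.2 = a) : e = sideEdge a s 0 ∨ e = sideEdge a s 1 := by
  obtain ⟨j, k, hj, hk, hjk, hej, h1, h2, h3⟩ := hmem
  have hja : j = a := by rw [← hej, he2]
  rw [hja] at hj hjk h2
  have key : ∀ ε : ℤ, e.1 k = s.1 k + ε → e = sideEdge a s ε := by
    intro ε hko
    have hp : e.1 = (sideEdge a s ε).1 := by
      funext w
      rcases fin3_cases s.2 a k w (fun hh => hj hh.symm) (fun hh => hk hh.symm) hjk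
        with rfl | rfl | rfl
      · simp only [sideEdge, if_pos rfl]
        exact h1
      · simp [sideEdge, hj, h2]
      · simp only [sideEdge, if_neg hk, if_neg (show ¬ w = a from fun hh => hjk hh.symm)]
        exact hko
    exact Prod.ext hp he2
  rcases h3 with h3 | h3
  · exact Or.inl (key 0 (by rw [h3, add_zero]))
  · exact Or.inr (key 1 h3)

lemma evenSide_unique {s : Sq} {e : GridEdge} {a : Fin 3} (h : a ≠ s.2)
    (hmem : e ∈ edgesOf s) (he2 : e.2 = a) (hp : epar e = 0) : evenSide a s = e := by
  rcases edge_eq_sideEdge hmem he2 with rfl | rfl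
  · rw [evenSide, if_pos hp]
  · rw [evenSide, if_neg]
    intro h0
    rw [epar_sideEdge a s h, h0] at hp
    exact absurd hp (by decide)

/-- Every band of a grid polyhedron contains an even number of grid
squares. -/
theorem band_card_even (C : Set Cell) (P : Set Sq) (hP : IsGridPolyhedron C P)
    (B : Set Sq) (hB : IsBand P B) : Even B.ncard := by
  classical
  obtain ⟨a, x, hne, hsub, hconn, hclose⟩ := hB
  have hBsub : B ⊆ P := fun s hs => (hsub hs).1
  have hBfin : B.Finite := hP.surface.finite.subset hBsub
  have key : ∀ s₀ ∈ B,
      (hBfin.toFinset.filter (fun u => evenSide a u = evenSide a s₀)).card = 2 := by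
    intro s₀ hs₀
    obtain ⟨hs₀P, hs₀2, hs₀a⟩ := hsub hs₀
    have hane : a ≠ s₀.2 := fun h => hs₀2 h.symm
    obtain ⟨hmem, hpar, he2⟩ := evenSide_spec (s := s₀) hane
    set e := evenSide a s₀ with he
    have hea : e.1 a = s₀.1 a := (edge_dir hmem he2).2
    have h2 := hP.edgeTwo e ⟨s₀, hs₀P, hmem⟩
    obtain ⟨u₁, u₂, hu12, hset⟩ := Set.ncard_eq_two.mp h2
    have claim : ∀ u, u ∈ P → e ∈ edgesOf u → u ∈ B ∧ evenSide a u = e := by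
      intro u huP hue
      obtain ⟨hau2, hua⟩ := edge_dir hue he2
      have huB : u ∈ B := by
        by_cases hh : u = s₀
        · exact hh ▸ hs₀
        · exact hclose s₀ hs₀ u ⟨huP, fun h' => hau2 h'.symm, by rw [← hua, hea, hs₀a]⟩
            ⟨fun h' => hh h'.symm, e, hmem, hue⟩
      exact ⟨huB, evenSide_unique hau2 hue he2 hpar⟩
    have hfe : hBfin.toFinset.filter (fun u => evenSide a u = e) = {u₁, u₂} := by
      ext u
      simp only [Finset.mem_filter, Set.Finite.mem_toFinset, Finset.mem_insert,
        Finset.mem_singleton]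
      constructor
      · rintro ⟨huB, hfu⟩
        have hu2 : a ≠ u.2 := fun h' => (hsub huB).2.1 h'.symm
        have : u ∈ ({u₁, u₂} : Set Sq) := by
          rw [← hset]
          exact ⟨hBsub huB, hfu ▸ (evenSide_spec hu2).1⟩
        simpa using this
      · intro hu
        have : u ∈ {s | s ∈ P ∧ e ∈ edgesOf s} := by
          rw [hset]
          simpa using hu
        exact claim u this.1 this.2
    rw [hfe]
    exact Finset.card_pair hu12
  have hcount := Finset.card_eq_sum_card_image (evenSide a) hBfin.toFinset
  have hterms : ∀ e ∈ hBfin.toFinset.image (evenSide a),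
      (hBfin.toFinset.filter fun u => evenSide a u = e).card = 2 := by
    intro e hep
    obtain ⟨s₀, hs₀, rfl⟩ := Finset.mem_image.mp hep
    exact key s₀ (hBfin.mem_toFinset.mp hs₀)
  rw [Finset.sum_congr rfl hterms, Finset.sum_const, smul_eq_mul] at hcount
  have hcard : B.ncard = hBfin.toFinset.card := Set.ncard_eq_toFinset_card B hBfin
  rw [hcard, hcount]
  exact even_two.mul_left _

end StripFold
end

section
/- For every milling tour of a grid polyhedron P that makes t turns, there exists a band cover of P of size at most t; in particular, the size of a minimum band cover of P is a lower bound on the number of turns in any milling tour of P. -/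
open scoped Classical

namespace StripFold

/-! ### Auxiliary machinery -/

lemma edge_basic {e : GridEdge} {s : Sq} (h : e ∈ edgesOf s) :
    e.2 ≠ s.2 ∧ e.1 e.2 = s.1 e.2 := by
  obtain ⟨j, k, hj, hk, hjk, hej, h1, h2, h3⟩ := h
  subst hej
  exact ⟨hj, h2⟩

/-- The connected component of `s` in the edge-adjacency graph on `T`. -/
def comp (T : Set Sq) (s : Sq) : Set Sq :=
  {u | ∃ (hs : s ∈ T) (hu : u ∈ T), (dualGraph T).Reachable ⟨s, hs⟩ ⟨u, hu⟩}

lemma mem_comp_self {T : Set Sq} {s : Sq} (hs : s ∈ T) : s ∈ comp T s :=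
  ⟨hs, hs, SimpleGraph.Reachable.refl _⟩

lemma comp_subset {T : Set Sq} {s : Sq} : comp T s ⊆ T := by
  rintro u ⟨_, hu, _⟩; exact hu

lemma comp_eq_of_adj {T : Set Sq} {s t : Sq} (hs : s ∈ T) (ht : t ∈ T)
    (h : edgeAdj s t) : comp T s = comp T t := by
  have hadj : (dualGraph T).Adj ⟨s, hs⟩ ⟨t, ht⟩ := h
  ext u
  constructor
  · rintro ⟨_, hu, r⟩
    exact ⟨ht, hu, (hadj.symm.reachable).trans r⟩
  · rintro ⟨_, hu, r⟩
    exact ⟨hs, hu, (hadj.reachable).trans r⟩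

lemma reachable_in_comp {T : Set Sq} {s : Sq} (hs : s ∈ T) :
    ∀ {a b : ↥T} (_ : (dualGraph T).Walk a b) (ha : a.1 ∈ comp T s),
      ∃ hb : b.1 ∈ comp T s,
        (dualGraph (comp T s)).Reachable ⟨a.1, ha⟩ ⟨b.1, hb⟩ := by
  intro a b p
  induction p with
  | nil => exact fun ha => ⟨ha, SimpleGraph.Reachable.refl _⟩
  | @cons a c b h q ih =>
    intro ha
    have hc : c.1 ∈ comp T s := by
      obtain ⟨_, hu, r⟩ := ha
      exact ⟨hs, c.2, r.trans (SimpleGraph.Adj.reachable h)⟩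
    obtain ⟨hb, r2⟩ := ih hc
    have hadj : (dualGraph (comp T s)).Adj ⟨a.1, ha⟩ ⟨c.1, hc⟩ := h
    exact ⟨hb, (hadj.reachable).trans r2⟩

lemma comp_isCompOf {T : Set Sq} {s : Sq} (hs : s ∈ T) : IsCompOf (comp T s) T := by
  refine ⟨⟨s, mem_comp_self hs⟩, comp_subset, ?_, ?_⟩
  · haveI : Nonempty ↑(comp T s) := ⟨⟨s, mem_comp_self hs⟩⟩
    refine ⟨?_⟩
    rintro ⟨u, hu⟩ ⟨u', hu'⟩
    obtain ⟨_, huT, r⟩ := hu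
    obtain ⟨_, huT', r'⟩ := hu'
    obtain ⟨p⟩ := r
    obtain ⟨p'⟩ := r'
    obtain ⟨h1, r1⟩ := reachable_in_comp hs p (mem_comp_self hs)
    obtain ⟨h2, r2⟩ := reachable_in_comp hs p' (mem_comp_self hs)
    exact r1.symm.trans r2
  · rintro g hg t ht hadj
    obtain ⟨_, hgT, r⟩ := hg
    exact ⟨hs, ht,
      r.trans (SimpleGraph.Adj.reachable
        (show (dualGraph T).Adj ⟨g, hgT⟩ ⟨t, ht⟩ from hadj))⟩

section WalkAux

variable {S : Set Sq} {v : ↥S} (w : (dualGraph S).Walk v v)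

lemma nextIdx_lt (hL : 0 < w.length) (k : ℕ) : nextIdx w k < w.length :=
  Nat.mod_lt _ hL

lemma prevIdx_lt (hL : 0 < w.length) (k : ℕ) : prevIdx w k < w.length :=
  Nat.mod_lt _ hL

lemma next_prev (hL : 0 < w.length) {k : ℕ} (hk : k < w.length) :
    nextIdx w (prevIdx w k) = k := by
  unfold nextIdx prevIdx
  rw [Nat.mod_add_mod]
  have h1 : k + w.length - 1 + 1 = k + w.length := by omega
  rw [h1, Nat.add_mod_right]
  exact Nat.mod_eq_of_lt hk

lemma prev_next (hL : 0 < w.length) {k : ℕ} (hk : k < w.length) :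
    prevIdx w (nextIdx w k) = k := by
  unfold nextIdx prevIdx
  have h1 : (k + 1) % w.length + w.length - 1 = (k + 1) % w.length + (w.length - 1) := by
    omega
  rw [h1, Nat.mod_add_mod]
  have h2 : k + 1 + (w.length - 1) = k + w.length := by omega
  rw [h2, Nat.add_mod_right]
  exact Nat.mod_eq_of_lt hk

lemma squareAt_next {k : ℕ} (hk : k < w.length) :
    squareAt w (nextIdx w k) = squareAt w (k + 1) := by
  unfold squareAt nextIdx
  rcases lt_or_eq_of_le (Nat.succ_le_of_lt hk) with h | h
  · rw [Nat.mod_eq_of_lt h]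
  · rw [show k + 1 = w.length from h, Nat.mod_self, SimpleGraph.Walk.getVert_zero,
      SimpleGraph.Walk.getVert_length]

lemma adj_step {k : ℕ} (hk : k < w.length) :
    edgeAdj (squareAt w k) (squareAt w (nextIdx w k)) := by
  rw [squareAt_next w hk]
  exact w.adj_getVert_succ hk

lemma exists_enterSide (hL : 0 < w.length) {m : ℕ} (hm : m < w.length) :
    ∃ e, EnterSide w m e := by
  have h := adj_step w (prevIdx_lt w hL m)
  rw [next_prev w hL hm] at h
  obtain ⟨hne, e, he⟩ := h
  exact ⟨e, he.1, he.2⟩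

noncomputable def entEdge (m : ℕ) : GridEdge :=
  if h : ∃ e, EnterSide w m e then h.choose else ((fun _ => (0 : ℤ)), (0 : Fin 3))

lemma entEdge_spec {m : ℕ} (h : ∃ e, EnterSide w m e) :
    EnterSide w m (entEdge w m) := by
  rw [entEdge, dif_pos h]
  exact h.choose_spec

noncomputable def slabDir (m : ℕ) : Fin 3 := (entEdge w m).2

noncomputable def slabPos (m : ℕ) : ℤ := (squareAt w m).1 (slabDir w m)

noncomputable def bandAt (m : ℕ) : Set Sq :=
  comp (slabSquares S (slabDir w m) (slabPos w m)) (squareAt w m)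

lemma squareAt_mem_slab (hL : 0 < w.length) {m : ℕ} (hm : m < w.length) :
    squareAt w m ∈ slabSquares S (slabDir w m) (slabPos w m) := by
  have hspec := entEdge_spec w (exists_enterSide w hL hm)
  have h2 := edge_basic hspec.2
  exact ⟨(w.getVert m).2, fun hh => h2.1 hh.symm, rfl⟩

lemma mem_bandAt_self (hL : 0 < w.length) {m : ℕ} (hm : m < w.length) :
    squareAt w m ∈ bandAt w m :=
  mem_comp_self (squareAt_mem_slab w hL hm)

lemma bandAt_isBand (hL : 0 < w.length) {m : ℕ} (hm : m < w.length) :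
    IsBand S (bandAt w m) :=
  ⟨slabDir w m, slabPos w m, comp_isCompOf (squareAt_mem_slab w hL hm)⟩

lemma prop_step (hL : 0 < w.length) {m : ℕ} (hm : m < w.length)
    (hns : ¬ TurnVisit w m) :
    slabDir w (nextIdx w m) = slabDir w m ∧
      slabPos w (nextIdx w m) = slabPos w m ∧
      bandAt w (nextIdx w m) = bandAt w m := by
  have hm' : nextIdx w m < w.length := nextIdx_lt w hL m
  have hspec' := entEdge_spec w (exists_enterSide w hL hm')
  have hexit : ExitSide w m (entEdge w (nextIdx w m)) := by
    unfold EnterSide at hspec'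
    rw [prev_next w hL hm] at hspec'
    exact hspec'
  have hspec := entEdge_spec w (exists_enterSide w hL hm)
  have hdir : (entEdge w (nextIdx w m)).2 = (entEdge w m).2 := by
    by_contra hne
    exact hns ⟨entEdge w m, entEdge w (nextIdx w m), hspec, hexit, fun hh => hne hh.symm⟩
  have hdir2 : slabDir w (nextIdx w m) = slabDir w m := hdir
  have ha := edge_basic hexit.1
  have hb := edge_basic hexit.2
  have hx : slabPos w (nextIdx w m) = slabPos w m := by
    unfold slabPos
    rw [hdir2]
    unfold slabDir
    rw [← hdir] at *
    rw [← hb.2]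
    exact ha.2
  refine ⟨hdir2, hx, ?_⟩
  unfold bandAt
  rw [hdir2, hx]
  have hmem := squareAt_mem_slab w hL hm
  have hmem' := squareAt_mem_slab w hL hm'
  rw [hdir2, hx] at hmem'
  exact comp_eq_of_adj hmem' hmem (edgeAdj_symm (adj_step w hm))

lemma next_iter_lt (hL : 0 < w.length) (i : ℕ) {k : ℕ} (hk : k < w.length) :
    (nextIdx w)^[i] k < w.length := by
  induction i with
  | zero => exact hk
  | succ n ih => rw [Function.iterate_succ_apply']; exact nextIdx_lt w hL _

lemma prev_iter_lt (hL : 0 < w.length) (i : ℕ) {k : ℕ} (hk : k < w.length) :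
    (prevIdx w)^[i] k < w.length := by
  induction i with
  | zero => exact hk
  | succ n ih => rw [Function.iterate_succ_apply']; exact prevIdx_lt w hL _

lemma next_prev_iter (hL : 0 < w.length) (i : ℕ) {k : ℕ} (hk : k < w.length) :
    (nextIdx w)^[i] ((prevIdx w)^[i] k) = k := by
  induction i with
  | zero => rfl
  | succ n ih =>
    rw [Function.iterate_succ_apply' (prevIdx w), Function.iterate_succ_apply (nextIdx w),
      next_prev w hL (prev_iter_lt w hL n hk)]
    exact ih

lemma prev_next_iter (hL : 0 < w.length) (i : ℕ) {k : ℕ} (hk : k < w.length) :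
    (prevIdx w)^[i] ((nextIdx w)^[i] k) = k := by
  induction i with
  | zero => rfl
  | succ n ih =>
    rw [Function.iterate_succ_apply' (nextIdx w), Function.iterate_succ_apply (prevIdx w),
      prev_next w hL (next_iter_lt w hL n hk)]
    exact ih

lemma next_iter_mod (hL : 0 < w.length) (i : ℕ) {k : ℕ} (hk : k < w.length) :
    (nextIdx w)^[i] k = (k + i) % w.length := by
  induction i with
  | zero => exact (Nat.mod_eq_of_lt hk).symm
  | succ n ih =>
    rw [Function.iterate_succ_apply', ih]
    unfold nextIdx
    rw [Nat.mod_add_mod, Nat.add_assoc]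

lemma next_of_prev_iter (hL : 0 < w.length) {a b : ℕ} (hab : a ≤ b) {k : ℕ}
    (hk : k < w.length) :
    (nextIdx w)^[a] ((prevIdx w)^[b] k) = (prevIdx w)^[b - a] k := by
  have h1 : (prevIdx w)^[b] k = (prevIdx w)^[a] ((prevIdx w)^[b - a] k) := by
    rw [← Function.iterate_add_apply, show a + (b - a) = b by omega]
  rw [h1, next_prev_iter w hL a (prev_iter_lt w hL (b - a) hk)]

lemma chain (hL : 0 < w.length) (i : ℕ) {k : ℕ} (hk : k < w.length)
    (h : ∀ j, j < i → ¬ TurnVisit w ((nextIdx w)^[j] k)) :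
    slabDir w ((nextIdx w)^[i] k) = slabDir w k ∧
      slabPos w ((nextIdx w)^[i] k) = slabPos w k ∧
      bandAt w ((nextIdx w)^[i] k) = bandAt w k := by
  induction i with
  | zero => exact ⟨rfl, rfl, rfl⟩
  | succ n ih =>
    obtain ⟨d1, d2, d3⟩ := ih (fun j hj => h j (hj.trans (Nat.lt_succ_self n)))
    have hlt : (nextIdx w)^[n] k < w.length := next_iter_lt w hL n hk
    have hstep := prop_step w hL hlt (h n (Nat.lt_succ_self n))
    rw [Function.iterate_succ_apply']
    exact ⟨hstep.1.trans d1, hstep.2.1.trans d2, hstep.2.2.trans d3⟩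

end WalkAux

lemma edgesOf_nonempty (s : Sq) : ∃ e, e ∈ edgesOf s := by
  have hkey : ∀ i : Fin 3, i + 1 ≠ i ∧ i + 2 ≠ i ∧ i + 1 ≠ i + 2 := by decide
  obtain ⟨h1, h2, h3⟩ := hkey s.2
  refine ⟨((fun a => if a = s.2 then s.1 s.2 + 1 else s.1 a), s.2 + 1),
    s.2 + 1, s.2 + 2, h1, h2, h3, rfl, ?_, ?_, ?_⟩
  · simp
  · simp [h1]
  · left; simp [h2]

lemma length_pos {C : Set Cell} {P : Set Sq} (hP : IsGridPolyhedron C P) {v : ↥P}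
    (w : (dualGraph P).Walk v v) (hw : IsMillingTour w) : 0 < w.length := by
  by_contra hcon
  have h0 : w.length = 0 := by omega
  have hall : ∀ u : ↥P, u = v := by
    intro u
    have hu := hw u
    rw [SimpleGraph.Walk.mem_support_iff_exists_getVert] at hu
    obtain ⟨n, hn1, hn2⟩ := hu
    rw [h0, Nat.le_zero] at hn2
    rw [← hn1, hn2, SimpleGraph.Walk.getVert_zero]
  obtain ⟨e, he⟩ := edgesOf_nonempty (v : Sq)
  have h2 := hP.edgeTwo e ⟨(v : Sq), v.2, he⟩
  have hsub : {s | s ∈ P ∧ e ∈ edgesOf s} ⊆ {(v : Sq)} := by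
    rintro s ⟨hs, -⟩
    have := hall ⟨s, hs⟩
    simp only [Set.mem_singleton_iff]
    exact congrArg Subtype.val this
  have := Set.ncard_le_ncard hsub (Set.finite_singleton _)
  rw [Set.ncard_singleton, h2] at this
  omega

lemma exists_normal {C : Set Cell} {P : Set Sq} (hP : IsGridPolyhedron C P)
    (i : Fin 3) : ∃ s ∈ P, s.2 = i := by
  obtain ⟨c, hc, hmin⟩ := Set.exists_min_image C (fun c => c i) hP.finC hP.neC
  refine ⟨(c - unitVec i, i), ?_, rfl⟩
  rw [hP.bdry]
  have h1 : (c - unitVec i) + unitVec i = c := by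
    funext a; simp
  have h2 : (c - unitVec i) ∉ C := by
    intro habs
    have := hmin _ habs
    simp [unitVec] at this
  show Xor' _ _
  rw [show ((c - unitVec i, i) : Sq).1 + unitVec ((c - unitVec i, i) : Sq).2
      = c from h1]
  exact Or.inr ⟨hc, h2⟩

/-- For every milling tour of a grid polyhedron `P` making `t` turns
there is a band cover of `P` of size at most `t` (so the minimum band cover size is a
lower bound on the number of turns of any milling tour). -/
theorem band_cover_of_milling_tour (C : Set Cell) (P : Set Sq)
    (hP : IsGridPolyhedron C P) {v : P} (w : (dualGraph P).Walk v v)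
    (hw : IsMillingTour w) (t : ℕ) (ht : turnCount w = t) :
    ∃ S : Set (Set Sq), IsBandCover P S ∧ S.ncard ≤ t := by
  have hL : 0 < w.length := length_pos hP w hw
  have hvisit : ∀ g ∈ P, ∃ m, m < w.length ∧ squareAt w m = g := by
    intro g hg
    have hu := hw ⟨g, hg⟩
    rw [SimpleGraph.Walk.mem_support_iff_exists_getVert] at hu
    obtain ⟨n, hn1, hn2⟩ := hu
    rcases lt_or_eq_of_le hn2 with h | h
    · exact ⟨n, h, by rw [squareAt, hn1]⟩
    · refine ⟨0, hL, ?_⟩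
      rw [h, SimpleGraph.Walk.getVert_length] at hn1
      rw [squareAt, SimpleGraph.Walk.getVert_zero]
      exact congrArg Subtype.val hn1
  have hT'fin : {k | k < w.length ∧ (TurnVisit w k ∨ UTurnVisit w k)}.Finite :=
    (Set.finite_Iio w.length).subset (fun k hk => hk.1)
  by_cases hTe : {k | k < w.length ∧ (TurnVisit w k ∨ UTurnVisit w k)}.Nonempty
  · obtain ⟨k₀, hk₀lt, hk₀t⟩ := hTe
    refine ⟨(fun k => bandAt w (nextIdx w k)) ''
      {k | k < w.length ∧ (TurnVisit w k ∨ UTurnVisit w k)}, ⟨?_, ?_⟩, ?_⟩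
    · rintro B ⟨k, hk, rfl⟩
      exact bandAt_isBand w hL (nextIdx_lt w hL k)
    · intro g hg
      obtain ⟨m, hm, hsq⟩ := hvisit g hg
      have hexist : ∃ d, 1 ≤ d ∧ ((prevIdx w)^[d] m < w.length ∧
          (TurnVisit w ((prevIdx w)^[d] m) ∨ UTurnVisit w ((prevIdx w)^[d] m))) := by
        obtain ⟨d, hd⟩ : ∃ d, d = m + w.length - k₀ := ⟨_, rfl⟩
        refine ⟨d, by omega, ?_⟩
        have h1 : (nextIdx w)^[d] k₀ = m := by
          rw [next_iter_mod w hL _ hk₀lt,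
            show k₀ + d = m + w.length by omega, Nat.add_mod_right]
          exact Nat.mod_eq_of_lt hm
        have h2 : (prevIdx w)^[d] m = k₀ := by
          rw [← h1, prev_next_iter w hL _ hk₀lt]
        rw [h2]
        exact ⟨hk₀lt, hk₀t⟩
      set d₀ := Nat.find hexist with hd₀def
      obtain ⟨hd₀1, hd₀T⟩ := Nat.find_spec hexist
      set k := (prevIdx w)^[d₀] m with hkdef
      have hsplit : (prevIdx w)^[d₀] m = prevIdx w ((prevIdx w)^[d₀ - 1] m) := by
        conv_lhs => rw [show d₀ = (d₀ - 1) + 1 by omega]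
        rw [Function.iterate_succ_apply']
      have hk'lt : (prevIdx w)^[d₀ - 1] m < w.length := prev_iter_lt w hL _ hm
      have hkk' : nextIdx w k = (prevIdx w)^[d₀ - 1] m := by
        rw [hkdef, hsplit, next_prev w hL hk'lt]
      have hchain := chain w hL (d₀ - 1) hk'lt ?hyp
      case hyp =>
        intro j hj
        have hform : (nextIdx w)^[j] ((prevIdx w)^[d₀ - 1] m) = (prevIdx w)^[d₀ - 1 - j] m :=
          next_of_prev_iter w hL (by omega) hm
        rw [hform]
        intro hturn
        have hmin := Nat.find_min hexist (show d₀ - 1 - j < d₀ by omega)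
        exact hmin ⟨by omega, prev_iter_lt w hL _ hm, Or.inl hturn⟩
      have hfin : (nextIdx w)^[d₀ - 1] ((prevIdx w)^[d₀ - 1] m) = m :=
        next_prev_iter w hL _ hm
      rw [hfin] at hchain
      refine ⟨bandAt w (nextIdx w k), ⟨k, hd₀T, rfl⟩, ?_⟩
      rw [hkk', ← hchain.2.2, ← hsq]
      exact mem_bandAt_self w hL hm
    · exact le_trans (Set.ncard_image_le hT'fin) ht.le
  · exfalso
    rw [Set.not_nonempty_iff_eq_empty] at hTe
    have hnt : ∀ m, m < w.length → ¬ TurnVisit w m := by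
      intro m hm hturn
      have hmem : m ∈ {k | k < w.length ∧ (TurnVisit w k ∨ UTurnVisit w k)} :=
        ⟨hm, Or.inl hturn⟩
      rw [hTe] at hmem
      exact hmem
    obtain ⟨s, hsP, hsn⟩ := exists_normal hP (slabDir w 0)
    obtain ⟨m, hm, hsq⟩ := hvisit s hsP
    have hm0 : (nextIdx w)^[m] 0 = m := by
      rw [next_iter_mod w hL m hL]
      simpa using Nat.mod_eq_of_lt hm
    have hchain := (chain w hL m hL (fun j _ => hnt _ (next_iter_lt w hL j hL))).1
    rw [hm0] at hchain
    have hslab := squareAt_mem_slab w hL hm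
    exact hslab.2.1 (by rw [hsq, hsn]; exact hchain.symm)

end StripFold
end

section
/- If S is a band cover of a grid polyhedron P and B is a band of P not in S, then every band of P that overlaps B belongs to S. -/
open scoped Classical

namespace StripFold

lemma fin3_two_of_ne : ∀ i a a' aD : Fin 3, i ≠ a → i ≠ a' → i ≠ aD → a ≠ a' →
    aD = a ∨ aD = a' := by decide

lemma comp_subset_s8 {T B B' : Set Sq} (hB : IsCompOf B T) (hB' : IsCompOf B' T)
    (g : Sq) (hgB : g ∈ B) (hgB' : g ∈ B') : B ⊆ B' := by
  intro s hs
  obtain ⟨-, hBT, hconn, -⟩ := hB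
  obtain ⟨w⟩ := hconn ⟨g, hgB⟩ ⟨s, hs⟩
  have key : ∀ (a b : B) (w : (dualGraph B).Walk a b), a.1 ∈ B' → b.1 ∈ B' := by
    intro a b w
    induction w with
    | nil => exact id
    | @cons a u b h p ih =>
      intro ha
      exact ih (hB'.2.2.2 _ ha _ (hBT u.2) h)
  exact key _ _ w hgB'

lemma comp_eq {T B B' : Set Sq} (hB : IsCompOf B T) (hB' : IsCompOf B' T)
    (g : Sq) (hgB : g ∈ B) (hgB' : g ∈ B') : B = B' :=
  Set.Subset.antisymm (comp_subset_s8 hB hB' g hgB hgB') (comp_subset_s8 hB' hB g hgB' hgB)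

/-- If `S` is a band cover of a grid polyhedron `P` and `B` is a band of
`P` not in `S`, then every band of `P` that overlaps `B` belongs to `S`. -/
theorem overlapping_bands_in_cover (C : Set Cell) (P : Set Sq)
    (hP : IsGridPolyhedron C P) (S : Set (Set Sq)) (hS : IsBandCover P S)
    (B : Set Sq) (hB : IsBand P B) (hBS : B ∉ S) :
    ∀ B' : Set Sq, IsBand P B' → Overlaps B' B → B' ∈ S := by
  intro B' hB' hov
  obtain ⟨hne, g, hgB', hgB⟩ := hov
  obtain ⟨a, x, hc⟩ := hB
  obtain ⟨a', x', hc'⟩ := hB'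
  have hgslab : g ∈ slabSquares P a x := hc.2.1 hgB
  have hgslab' : g ∈ slabSquares P a' x' := hc'.2.1 hgB'
  have hgP : g ∈ P := hgslab.1
  obtain ⟨D, hDS, hgD⟩ := hS.2 g hgP
  obtain ⟨aD, xD, hcD⟩ := hS.1 D hDS
  have hgslabD : g ∈ slabSquares P aD xD := hcD.2.1 hgD
  -- axes
  have ha : g.2 ≠ a ∧ g.1 a = x := ⟨hgslab.2.1, hgslab.2.2⟩
  have ha' : g.2 ≠ a' ∧ g.1 a' = x' := ⟨hgslab'.2.1, hgslab'.2.2⟩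
  have haD : g.2 ≠ aD ∧ g.1 aD = xD := ⟨hgslabD.2.1, hgslabD.2.2⟩
  have haa' : a ≠ a' := by
    intro h
    apply hne
    subst h
    have hx : x = x' := by rw [← ha.2, ha'.2]
    subst hx
    exact comp_eq hc' hc g hgB' hgB
  have hcases : aD = a ∨ aD = a' := fin3_two_of_ne g.2 a a' aD ha.1 ha'.1 haD.1 haa'
  rcases hcases with h | h
  · exfalso
    apply hBS
    subst h
    have hx : xD = x := by rw [← haD.2, ha.2]
    subst hx
    have : D = B := comp_eq hcD hc g hgD hgB
    rwa [← this]
  · subst h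
    have hx : xD = x' := by rw [← haD.2, ha'.2]
    subst hx
    have : D = B' := comp_eq hcD hc' g hgD hgB'
    rwa [← this]

end StripFold
end

section
/- If S is a band cover of a grid polyhedron P, then the graph with vertex set S and an edge between two bands of S whenever they overlap or are adjacent is connected. -/
open scoped Classical

namespace StripFold

/-- The graph on a set `S` of bands joining two distinct bands whenever they overlap
or are adjacent. -/
def coverGraph (S : Set (Set Sq)) : SimpleGraph S where
  Adj B B' := B ≠ B' ∧ (Overlaps B.1 B'.1 ∨ BandAdjacent B.1 B'.1)
  symm := by
    constructor
    rintro B B' ⟨hne, h⟩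
    refine ⟨hne.symm, ?_⟩
    rcases h with ⟨hne', hov⟩ | ⟨hno, g, hg, g', hg', hadj⟩
    · exact Or.inl ⟨hne'.symm, by rw [Set.inter_comm]; exact hov⟩
    · exact Or.inr ⟨fun ⟨a, b⟩ => hno ⟨a.symm, by rw [Set.inter_comm]; exact b⟩,
        g', hg', g, hg, edgeAdj_symm hadj⟩
  loopless := ⟨fun _ h => h.1 rfl⟩

/-- If `S` is a band cover of a grid polyhedron `P`, then the graph with
vertex set `S` and an edge between two bands of `S` whenever they overlap or are
adjacent is connected. -/
theorem cover_graph_connected (C : Set Cell) (P : Set Sq)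
    (hP : IsGridPolyhedron C P) (S : Set (Set Sq)) (hS : IsBandCover P S) :
    (coverGraph S).Connected := by
  obtain ⟨hband, hcov⟩ := hS
  have hsub : ∀ B ∈ S, B ⊆ P := by
    intro B hB g hg
    obtain ⟨a, x, _, hs, _, _⟩ := hband B hB
    exact (hs hg).1
  have hne : ∀ B ∈ S, B.Nonempty := by
    intro B hB
    obtain ⟨a, x, h1, _, _, _⟩ := hband B hB
    exact h1
  have key : ∀ (B B' : S) (g g' : Sq), g ∈ B.1 → g' ∈ B'.1 →
      (g = g' ∨ edgeAdj g g') → (coverGraph S).Reachable B B' := by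
    intro B B' g g' hg hg' hgg
    by_cases hBB : B = B'
    · exact hBB ▸ SimpleGraph.Reachable.refl B
    have hBB1 : B.1 ≠ B'.1 := fun h => hBB (Subtype.ext h)
    by_cases hint : (B.1 ∩ B'.1).Nonempty
    · exact SimpleGraph.Adj.reachable ⟨hBB, Or.inl ⟨hBB1, hint⟩⟩
    · have hadj : edgeAdj g g' := by
        rcases hgg with rfl | h
        · exact absurd ⟨g, hg, hg'⟩ hint
        · exact h
      exact SimpleGraph.Adj.reachable ⟨hBB, Or.inr
        ⟨fun hov => hint hov.2, g, hg, g', hg', hadj⟩⟩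
  have main : ∀ (u u' : P) (w : (dualGraph P).Walk u u') (B B' : S),
      u.1 ∈ B.1 → u'.1 ∈ B'.1 → (coverGraph S).Reachable B B' := by
    intro u u' w
    induction w with
    | nil => intro B B' hB hB'; exact key B B' _ _ hB hB' (Or.inl rfl)
    | @cons a b c h p ih =>
      intro B B' hB hB'
      obtain ⟨B₁, hB₁S, hB₁⟩ := hcov b.1 b.2
      exact (key B ⟨B₁, hB₁S⟩ a.1 b.1 hB hB₁ (Or.inr h)).trans
        (ih ⟨B₁, hB₁S⟩ B' hB₁ hB')
  have hSne : Nonempty S := by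
    obtain ⟨g, hg⟩ := hP.surface.nonempty
    obtain ⟨B, hBS, _⟩ := hcov g hg
    exact ⟨⟨B, hBS⟩⟩
  refine ⟨fun B B' => ?_⟩
  obtain ⟨g, hg⟩ := hne B.1 B.2
  obtain ⟨g', hg'⟩ := hne B'.1 B'.2
  have hgP : g ∈ P := hsub B.1 B.2 hg
  have hg'P : g' ∈ P := hsub B'.1 B'.2 hg'
  obtain ⟨w⟩ := hP.surface.connected ⟨g, hgP⟩ ⟨g', hg'P⟩
  exact main ⟨g, hgP⟩ ⟨g', hg'P⟩ w B B' hg hg'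

end StripFold
end
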